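/- Let $(S,\Sigma)$ be a measurable space, $\mu$ a finite measure, and $f, f^{(n)} \in L^1(S;\mu)$. Then $\liminf_{n\to\infty}\inf_{A\in\Sigma}(\int_A f^{(n)}\,d\mu - \int_A f\,d\mu) \ge 0$ if and only if (i) for each $\varepsilon>0$, $\mu(\{s: f^{(n)}(s) \le f(s)-\varepsilon\}) \to 0$, and (ii) $\liminf_{K\to+\infty}\inf_{n\ge1}\int_S f^{(n)}\mathbf{1}\{f^{(n)} \le -K\}\,d\mu \ge 0$. -/

import Mathlib

open MeasureTheory Filter Topology

/-- Finitely many reals are bounded above. -/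
private lemma exists_max_lt (g : ℕ → ℝ) (N : ℕ) : ∃ K : ℝ, ∀ n < N, g n ≤ K := by
  induction N with
  | zero => exact ⟨0, fun n hn => absurd hn (Nat.not_lt_zero n)⟩
  | succ N ih =>
    obtain ⟨K, hK⟩ := ih
    refine ⟨max K (g N), fun n hn => ?_⟩
    rcases Nat.lt_succ_iff_lt_or_eq.mp hn with h | h
    · exact (hK n h).trans (le_max_left _ _)
    · subst h; exact le_max_right _ _

/-- Absolute continuity of the integral of a single integrable function. -/
private lemma abs_cont {S : Type*} [MeasurableSpace S] {μ : Measure S}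
    {g : S → ℝ} (hg : Integrable g μ) {ε : ℝ} (hε : 0 < ε) :
    ∃ δ : ℝ, 0 < δ ∧ ∀ A : Set S, μ A ≤ ENNReal.ofReal δ → ∫ x in A, |g x| ∂μ ≤ ε := by
  have hne : ∫⁻ x, (‖g x‖₊ : ENNReal) ∂μ ≠ ⊤ := hg.2.ne
  obtain ⟨δ, hδ0, hδ⟩ := exists_pos_setLIntegral_lt_of_measure_lt hne
    (ε := ENNReal.ofReal ε) (ENNReal.ofReal_pos.mpr hε).ne'
  obtain ⟨r, _, hrδ, hrδ'⟩ := ENNReal.lt_iff_exists_real_btwn.mp hδ0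
  refine ⟨r, ENNReal.ofReal_pos.mp hrδ, fun A hA => ?_⟩
  have hlt : μ A < δ := lt_of_le_of_lt hA hrδ'
  have hlint := (hδ A hlt).le
  have habs : ∫ x in A, |g x| ∂μ = (∫⁻ x in A, (‖g x‖₊ : ENNReal) ∂μ).toReal := by
    show _ = (∫⁻ x in A, ‖g x‖ₑ ∂μ).toReal
    rw [← integral_norm_eq_lintegral_enorm (hg.aestronglyMeasurable.restrict)]
    simp [Real.norm_eq_abs]
  rw [habs]
  exact ENNReal.toReal_le_of_le_ofReal hε.le hlint

/-- Markov's inequality, divided form. -/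
private lemma markov_div {S : Type*} [MeasurableSpace S] {μ : Measure S}
    {g : S → ℝ} (hg : Integrable g μ) (hg0 : 0 ≤ g) {c : ℝ} (hc : 0 < c) :
    (μ {x | c ≤ g x}).toReal ≤ (∫ x, g x ∂μ) / c := by
  have h := mul_meas_ge_le_integral_of_nonneg (ae_of_all μ hg0) hg c
  rw [le_div_iff₀ hc, mul_comm]
  exact h

private theorem uniform_fatou_aux {S : Type*} [MeasurableSpace S]
    (μ : Measure S) [IsFiniteMeasure μ]
    (f : S → ℝ) (F : ℕ → S → ℝ)
    (hfm : Measurable f) (hFm : ∀ n, Measurable (F n))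
    (hf : Integrable f μ) (hF : ∀ n, Integrable (F n) μ) :
    (∀ ε : ℝ, 0 < ε → ∀ᶠ n in atTop,
      -ε ≤ ⨅ (A : Set S) (_ : MeasurableSet A),
        (∫ s in A, F n s ∂μ - ∫ s in A, f s ∂μ)) ↔
    ((∀ ε : ℝ, 0 < ε →
        Tendsto (fun n => μ {s | F n s ≤ f s - ε}) atTop (𝓝 0)) ∧
      (∀ ε : ℝ, 0 < ε → ∃ K₀ : ℝ, ∀ K ≥ K₀, ∀ n,
        -ε ≤ ∫ s in {x | F n x ≤ -K}, F n s ∂μ)) := by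
  set P : ℕ → S → ℝ := fun n x => max (f x - F n x) 0 with hP
  have hPint : ∀ n, Integrable (P n) μ := fun n => (hf.sub (hF n)).pos_part
  have hPnn : ∀ n x, 0 ≤ P n x := fun n x => le_max_right _ _
  have hPle : ∀ n x, f x - F n x ≤ P n x := fun n x => le_max_left _ _
  -- |set integral| bound over arbitrary sets
  have habsOn : ∀ (g : S → ℝ) (A : Set S),
      |∫ s in A, g s ∂μ| ≤ ∫ x in A, |g x| ∂μ := fun g A => by
    simpa [Real.norm_eq_abs] using norm_integral_le_integral_norm (μ := μ.restrict A) g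
  have habs : ∀ (g : S → ℝ), Integrable g μ → ∀ A : Set S,
      |∫ s in A, g s ∂μ| ≤ ∫ x, |g x| ∂μ := by
    intro g hg A
    exact (habsOn g A).trans
      (setIntegral_le_integral hg.abs (ae_of_all _ fun x => abs_nonneg _))
  -- key lower bound for measurable sets
  have keyA : ∀ n (A : Set S), MeasurableSet A →
      -(∫ x, P n x ∂μ) ≤ ∫ s in A, F n s ∂μ - ∫ s in A, f s ∂μ := by
    intro n A hA
    have h1 : ∫ s in A, F n s ∂μ - ∫ s in A, f s ∂μ = ∫ s in A, (F n s - f s) ∂μ :=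
      (integral_sub ((hF n).integrableOn) (hf.integrableOn)).symm
    have h2 : ∫ s in A, (-(P n s)) ∂μ ≤ ∫ s in A, (F n s - f s) ∂μ := by
      refine setIntegral_mono ((hPint n).integrableOn.neg) (((hF n).sub hf).integrableOn) ?_
      intro x
      have := hPle n x
      simp only [Pi.neg_apply]
      linarith
    have h3 : ∫ s in A, (-(P n s)) ∂μ = -∫ s in A, P n s ∂μ := integral_neg _
    have h4 : ∫ s in A, P n s ∂μ ≤ ∫ x, P n x ∂μ :=
      setIntegral_le_integral (hPint n) (ae_of_all _ fun x => hPnn n x)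
    linarith
  -- bounded below
  have hbdd : ∀ n, BddBelow (Set.range fun A : Set S =>
      ⨅ (_ : MeasurableSet A), (∫ s in A, F n s ∂μ - ∫ s in A, f s ∂μ)) := by
    intro n
    refine ⟨-(∫ x, |F n x| ∂μ + ∫ x, |f x| ∂μ), ?_⟩
    rintro b ⟨A, rfl⟩
    show -(∫ x, |F n x| ∂μ + ∫ x, |f x| ∂μ) ≤
      ⨅ (_ : MeasurableSet A), (∫ s in A, F n s ∂μ - ∫ s in A, f s ∂μ)
    have hnn1 : 0 ≤ ∫ x, |F n x| ∂μ := integral_nonneg fun x => abs_nonneg _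
    have hnn2 : 0 ≤ ∫ x, |f x| ∂μ := integral_nonneg fun x => abs_nonneg _
    by_cases hA : MeasurableSet A
    · rw [ciInf_pos hA]
      have e1 := abs_le.mp (habs (F n) (hF n) A)
      have e2 := abs_le.mp (habs f hf A)
      linarith [e1.1, e2.2]
    · haveI : IsEmpty (MeasurableSet A) := ⟨hA⟩
      rw [Real.iInf_of_isEmpty]
      linarith
  -- the infimum is at most -∫ P n
  have keyB : ∀ n, (⨅ (A : Set S) (_ : MeasurableSet A),
      (∫ s in A, F n s ∂μ - ∫ s in A, f s ∂μ)) ≤ -(∫ x, P n x ∂μ) := by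
    intro n
    set A0 : Set S := {x | F n x < f x} with hA0def
    have hA0 : MeasurableSet A0 := measurableSet_lt (hFm n) hfm
    have hval : ∫ s in A0, F n s ∂μ - ∫ s in A0, f s ∂μ = -(∫ x, P n x ∂μ) := by
      rw [← integral_sub ((hF n).integrableOn) hf.integrableOn]
      have hcg : ∫ s in A0, (F n s - f s) ∂μ = ∫ s in A0, (-(P n s)) ∂μ := by
        refine setIntegral_congr_fun hA0 fun x hx => ?_
        have hx' : F n x < f x := hx
        simp only [hP]
        rw [max_eq_left (by linarith)]
        ring
      rw [hcg, integral_neg]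
      congr 1
      refine setIntegral_eq_integral_of_forall_compl_eq_zero fun x hx => ?_
      have hx' : ¬ (F n x < f x) := hx
      simp only [hP]
      rw [max_eq_right (by linarith [not_lt.mp hx'])]
    calc (⨅ (A : Set S) (_ : MeasurableSet A),
        (∫ s in A, F n s ∂μ - ∫ s in A, f s ∂μ))
        ≤ ⨅ (_ : MeasurableSet A0), (∫ s in A0, F n s ∂μ - ∫ s in A0, f s ∂μ) :=
          ciInf_le (hbdd n) A0
      _ = ∫ s in A0, F n s ∂μ - ∫ s in A0, f s ∂μ := ciInf_pos hA0
      _ = -(∫ x, P n x ∂μ) := hval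
  -- reformulation via Q
  have Q_of_LHS : (∀ ε : ℝ, 0 < ε → ∀ᶠ n in atTop,
      -ε ≤ ⨅ (A : Set S) (_ : MeasurableSet A),
        (∫ s in A, F n s ∂μ - ∫ s in A, f s ∂μ)) →
      ∀ ε : ℝ, 0 < ε → ∀ᶠ n in atTop, ∫ x, P n x ∂μ ≤ ε := by
    intro h ε hε
    filter_upwards [h ε hε] with n hn
    have := hn.trans (keyB n)
    linarith
  have LHS_of_Q : (∀ ε : ℝ, 0 < ε → ∀ᶠ n in atTop, ∫ x, P n x ∂μ ≤ ε) →
      ∀ ε : ℝ, 0 < ε → ∀ᶠ n in atTop,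
      -ε ≤ ⨅ (A : Set S) (_ : MeasurableSet A),
        (∫ s in A, F n s ∂μ - ∫ s in A, f s ∂μ) := by
    intro h ε hε
    filter_upwards [h ε hε] with n hn
    refine le_ciInf fun A => ?_
    by_cases hA : MeasurableSet A
    · rw [ciInf_pos hA]
      exact le_trans (by linarith) (keyA n A hA)
    · haveI : IsEmpty (MeasurableSet A) := ⟨hA⟩
      rw [Real.iInf_of_isEmpty]
      linarith
  constructor
  · intro h
    have hQ := Q_of_LHS h
    constructor
    · -- part (i)
      intro ε hε
      rw [ENNReal.tendsto_atTop_zero]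
      intro η hη
      by_cases hηtop : η = ⊤
      · exact ⟨0, fun n _ => hηtop ▸ le_top⟩
      have hηr : 0 < η.toReal := ENNReal.toReal_pos hη.ne' hηtop
      obtain ⟨N, hN⟩ := eventually_atTop.mp (hQ (ε * η.toReal) (by positivity))
      refine ⟨N, fun n hn => ?_⟩
      have hsub : {s | F n s ≤ f s - ε} ⊆ {x | ε ≤ P n x} := by
        intro x hx
        have hx' : F n x ≤ f x - ε := hx
        have hx2 : ε ≤ f x - F n x := by linarith
        exact Set.mem_setOf_eq ▸ hx2.trans (hPle n x)
      have hm := markov_div (hPint n) (fun x => hPnn n x) hε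
      have hi : (∫ x, P n x ∂μ) / ε ≤ η.toReal := by
        rw [div_le_iff₀ hε, mul_comm]
        exact hN n hn
      have h1 : (μ {s | F n s ≤ f s - ε}).toReal ≤ η.toReal :=
        le_trans (ENNReal.toReal_mono (measure_ne_top μ _) (measure_mono hsub)) (hm.trans hi)
      exact (ENNReal.toReal_le_toReal (measure_ne_top μ _) hηtop).mp h1
    · -- part (ii)
      intro ε hε
      obtain ⟨N, hN⟩ := eventually_atTop.mp (hQ (ε / 4) (by positivity))
      obtain ⟨δ, hδpos, hδ⟩ := abs_cont hf (half_pos hε)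
      set If : ℝ := ∫ x, |f x| ∂μ with hIf
      have hIf0 : 0 ≤ If := integral_nonneg fun x => abs_nonneg _
      set K₁ : ℝ := max 1 ((ε / 2 + 2 * If + 1) / δ) with hK₁
      have claim1 : ∀ K ≥ K₁, ∀ n ≥ N, -ε ≤ ∫ s in {x | F n x ≤ -K}, F n s ∂μ := by
        intro K hK n hn
        have hK1 : (1 : ℝ) ≤ K := le_trans (le_max_left _ _) hK
        have hK0 : (0 : ℝ) < K := by linarith
        set A : Set S := {x | F n x ≤ -K} with hAdef
        have hA : MeasurableSet A := measurableSet_le (hFm n) measurable_const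
        have hsub : A ⊆ {x | K / 2 ≤ P n x} ∪ {x | K / 2 ≤ |f x|} := by
          intro x hx
          have hx' : F n x ≤ -K := hx
          by_cases hc : K / 2 ≤ |f x|
          · exact Or.inr hc
          · left
            have h1 : -(K / 2) < f x := (abs_lt.mp (not_le.mp hc)).1
            have hx2 : K / 2 ≤ f x - F n x := by linarith
            exact Set.mem_setOf_eq ▸ hx2.trans (hPle n x)
        have m1 : (μ {x | K / 2 ≤ P n x}).toReal ≤ (ε / 4) / (K / 2) := by
          refine (markov_div (hPint n) (fun x => hPnn n x) (by positivity)).trans ?_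
          have hhalf : (0 : ℝ) < K / 2 := by positivity
          exact (div_le_div_iff_of_pos_right hhalf).mpr (hN n hn)
        have m2 : (μ {x | K / 2 ≤ |f x|}).toReal ≤ If / (K / 2) :=
          markov_div hf.abs (fun x => abs_nonneg _) (by positivity)
        have hμA : (μ A).toReal ≤ δ := by
          have h1 : μ A ≤ μ {x | K / 2 ≤ P n x} + μ {x | K / 2 ≤ |f x|} :=
            (measure_mono hsub).trans (measure_union_le _ _)
          have h2 : (μ A).toReal ≤ (μ {x | K / 2 ≤ P n x}).toReal
              + (μ {x | K / 2 ≤ |f x|}).toReal := by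
            rw [← ENNReal.toReal_add (measure_ne_top μ _) (measure_ne_top μ _)]
            exact ENNReal.toReal_mono (by finiteness) h1
          have h3 : (ε / 4) / (K / 2) + If / (K / 2) = (ε / 2 + 2 * If) / K := by
            field_simp
            ring
          have h4 : (ε / 2 + 2 * If + 1) / δ ≤ K := le_trans (le_max_right _ _) hK
          have h5 : ε / 2 + 2 * If + 1 ≤ K * δ := (div_le_iff₀ hδpos).mp h4
          have h6 : (ε / 2 + 2 * If) / K ≤ δ := by
            rw [div_le_iff₀ hK0, mul_comm]
            linarith
          linarith
        have hμA' : μ A ≤ ENNReal.ofReal δ := by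
          rw [ENNReal.le_ofReal_iff_toReal_le (measure_ne_top μ _) hδpos.le]
          exact hμA
        have hintf : ∫ x in A, |f x| ∂μ ≤ ε / 2 := hδ A hμA'
        have hAf : -(ε / 2) ≤ ∫ s in A, f s ∂μ := by
          have h1 := abs_le.mp (habsOn f A)
          linarith [h1.1]
        have hkA := keyA n A hA
        have hPb : ∫ x, P n x ∂μ ≤ ε / 4 := hN n hn
        linarith
      have claim2 : ∀ n, ∃ Kn : ℝ, ∀ K ≥ Kn, -ε ≤ ∫ s in {x | F n x ≤ -K}, F n s ∂μ := by
        intro n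
        obtain ⟨δn, hδn, hδn'⟩ := abs_cont (hF n) hε
        set In : ℝ := ∫ x, |F n x| ∂μ with hIn
        refine ⟨max 1 (In / δn), fun K hK => ?_⟩
        have hK1 : (1 : ℝ) ≤ K := le_trans (le_max_left _ _) hK
        have hK0 : (0 : ℝ) < K := by linarith
        set A : Set S := {x | F n x ≤ -K} with hAdef
        have hsub : A ⊆ {x | K ≤ |F n x|} := by
          intro x hx
          have hx' : F n x ≤ -K := hx
          have hx2 : K ≤ -(F n x) := by linarith
          exact Set.mem_setOf_eq ▸ le_abs.mpr (Or.inr hx2)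
        have m := markov_div (hF n).abs (fun x => abs_nonneg _) hK0
        have hμA : (μ A).toReal ≤ δn := by
          have h1 : (μ A).toReal ≤ In / K :=
            le_trans (ENNReal.toReal_mono (measure_ne_top μ _) (measure_mono hsub)) m
          have h2 : In / K ≤ δn := by
            rw [div_le_iff₀ hK0, mul_comm]
            have h3 : In / δn ≤ K := le_trans (le_max_right _ _) hK
            have h4 : In ≤ K * δn := (div_le_iff₀ hδn).mp h3
            linarith
          linarith
        have hμA' : μ A ≤ ENNReal.ofReal δn := by
          rw [ENNReal.le_ofReal_iff_toReal_le (measure_ne_top μ _) hδn.le]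
          exact hμA
        have hintF : ∫ x in A, |F n x| ∂μ ≤ ε := hδn' A hμA'
        have h1 := abs_le.mp (habsOn (F n) A)
        linarith [h1.1]
      choose Kf hKf using claim2
      obtain ⟨K₂, hK₂⟩ := exists_max_lt Kf N
      refine ⟨max K₁ K₂, fun K hK n => ?_⟩
      rcases lt_or_ge n N with h' | h'
      · exact hKf n K (le_trans (hK₂ n h') (le_trans (le_max_right _ _) hK))
      · exact claim1 K (le_trans (le_max_left _ _) hK) n h'
  · rintro ⟨hi, hii⟩
    refine LHS_of_Q ?_
    intro ε hε
    obtain ⟨K₀, hK₀⟩ := hii (ε / 4) (by positivity)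
    set K : ℝ := max K₀ 1 with hKdef
    have hK0 : (0 : ℝ) < K := lt_of_lt_of_le one_pos (le_max_right _ _)
    obtain ⟨δ₂, hδ₂pos, hδ₂⟩ := abs_cont hf (show (0:ℝ) < ε / 4 by positivity)
    set t : ℝ := (μ Set.univ).toReal with ht
    have ht0 : 0 ≤ t := ENNReal.toReal_nonneg
    set δ : ℝ := ε / (4 * (t + 1)) with hδdef
    have hδpos : 0 < δ := by positivity
    set η : ENNReal := ENNReal.ofReal (min δ₂ (ε / (4 * K))) with hη
    have hηpos : 0 < η := ENNReal.ofReal_pos.mpr (lt_min hδ₂pos (by positivity))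
    have hev := (hi δ hδpos).eventually_lt_const hηpos
    filter_upwards [hev] with n hn
    set A : Set S := {s | F n s ≤ f s - δ} with hAdef
    have hA : MeasurableSet A := measurableSet_le (hFm n) (hfm.sub measurable_const)
    have b1 : μ A ≤ ENNReal.ofReal δ₂ :=
      hn.le.trans (ENNReal.ofReal_le_ofReal (min_le_left _ _))
    have b2 : (μ A).toReal ≤ ε / (4 * K) :=
      ENNReal.toReal_le_of_le_ofReal (by positivity)
        (hn.le.trans (ENNReal.ofReal_le_ofReal (min_le_right _ _)))
    set B : Set S := {x | F n x ≤ -K} with hBdef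
    have hB : MeasurableSet B := measurableSet_le (hFm n) measurable_const
    have split1 : ∫ x in A, P n x ∂μ + ∫ x in Aᶜ, P n x ∂μ = ∫ x, P n x ∂μ :=
      integral_add_compl hA (hPint n)
    have hcomp : ∫ x in Aᶜ, P n x ∂μ ≤ ε / 4 := by
      have h1 : ∫ x in Aᶜ, P n x ∂μ ≤ ∫ _x in Aᶜ, δ ∂μ := by
        refine setIntegral_mono_on ((hPint n).integrableOn)
          (integrableOn_const (measure_ne_top μ _)) hA.compl ?_
        intro x hx
        have hx' : ¬ (F n x ≤ f x - δ) := hx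
        exact max_le (by linarith [not_le.mp hx']) hδpos.le
      have h2 : ∫ _x in Aᶜ, (δ : ℝ) ∂μ = (μ Aᶜ).toReal * δ := by
        rw [setIntegral_const]; simp [smul_eq_mul, measureReal_def]
      have h3 : (μ Aᶜ).toReal ≤ t :=
        ENNReal.toReal_mono (measure_ne_top μ _) (measure_mono (Set.subset_univ _))
      have h4 : (μ Aᶜ).toReal * δ ≤ t * δ := mul_le_mul_of_nonneg_right h3 hδpos.le
      have h5 : t * δ ≤ ε / 4 := by
        have h6 : t * δ ≤ (t + 1) * δ := by nlinarith
        have heq : (t + 1) * δ = ε / 4 := by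
          rw [hδdef]
          field_simp
        linarith
      linarith
    have hAint : ∫ x in A, P n x ∂μ = ∫ x in A, f x ∂μ - ∫ x in A, F n x ∂μ := by
      rw [← integral_sub hf.integrableOn ((hF n).integrableOn)]
      refine setIntegral_congr_fun hA fun x hx => ?_
      have hx' : F n x ≤ f x - δ := hx
      simp only [hP]
      rw [max_eq_left (by linarith)]
    have hAf : ∫ x in A, f x ∂μ ≤ ε / 4 := by
      have h1 := (abs_le.mp (habsOn f A)).2
      exact h1.trans (hδ₂ A b1)
    have hsplit2 : ∫ x in A ∩ B, F n x ∂μ + ∫ x in A \ B, F n x ∂μ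
        = ∫ x in A, F n x ∂μ := integral_inter_add_diff hB ((hF n).integrableOn)
    have h6 : ∫ x in B, F n x ∂μ ≤ ∫ x in A ∩ B, F n x ∂μ := by
      have hmono : ∫ x in A ∩ B, (-(F n x)) ∂μ ≤ ∫ x in B, (-(F n x)) ∂μ := by
        refine setIntegral_mono_set ((hF n).neg.integrableOn) ?_
          (HasSubset.Subset.eventuallyLE Set.inter_subset_right)
        refine (ae_restrict_iff' hB).mpr (ae_of_all _ fun x hx => ?_)
        have hx' : F n x ≤ -K := hx
        simp only [Pi.zero_apply, neg_nonneg]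
        linarith
      simp only [integral_neg] at hmono
      linarith
    have h7 : -(ε / 4) ≤ ∫ x in B, F n x ∂μ := hK₀ K (le_max_left _ _) n
    have h8 : -(ε / 4) ≤ ∫ x in A \ B, F n x ∂μ := by
      have h81 : ∫ _x in A \ B, (-K : ℝ) ∂μ ≤ ∫ x in A \ B, F n x ∂μ := by
        refine setIntegral_mono_on (integrableOn_const (measure_ne_top μ _))
          ((hF n).integrableOn) (hA.diff hB) ?_
        intro x hx
        have hx' : ¬ (F n x ≤ -K) := hx.2
        linarith [not_le.mp hx']
      have h82 : ∫ _x in A \ B, (-K : ℝ) ∂μ = (μ (A \ B)).toReal * (-K) := by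
        rw [setIntegral_const]; simp [smul_eq_mul, measureReal_def]
      have h83 : (μ (A \ B)).toReal ≤ (μ A).toReal :=
        ENNReal.toReal_mono (measure_ne_top μ _) (measure_mono Set.diff_subset)
      have h84 : (μ (A \ B)).toReal * K ≤ (ε / (4 * K)) * K :=
        mul_le_mul_of_nonneg_right (h83.trans b2) hK0.le
      have h85 : (ε / (4 * K)) * K = ε / 4 := by
        field_simp
      nlinarith
    linarith

/-- Uniform Fatou's Lemma for a fixed finite measure. -/
theorem uniform_fatou_stmt7 {S : Type*} [MeasurableSpace S]
    (μ : Measure S) [IsFiniteMeasure μ]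
    (f : S → ℝ) (F : ℕ → S → ℝ)
    (hf : Integrable f μ) (hF : ∀ n, Integrable (F n) μ) :
    (∀ ε : ℝ, 0 < ε → ∀ᶠ n in atTop,
      -ε ≤ ⨅ (A : Set S) (_ : MeasurableSet A),
        (∫ s in A, F n s ∂μ - ∫ s in A, f s ∂μ)) ↔
    ((∀ ε : ℝ, 0 < ε →
        Tendsto (fun n => μ {s | F n s ≤ f s - ε}) atTop (𝓝 0)) ∧
      (∀ ε : ℝ, 0 < ε → ∃ K₀ : ℝ, ∀ K ≥ K₀, ∀ n,
        -ε ≤ ∫ s in {x | F n x ≤ -K}, F n s ∂μ)) := by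
  classical
  set f' : S → ℝ := hf.aestronglyMeasurable.mk f with hf'def
  set G : ℕ → S → ℝ := fun n => (hF n).aestronglyMeasurable.mk (F n) with hGdef
  have hf'm : Measurable f' := hf.aestronglyMeasurable.stronglyMeasurable_mk.measurable
  have hGm : ∀ n, Measurable (G n) :=
    fun n => (hF n).aestronglyMeasurable.stronglyMeasurable_mk.measurable
  have hfe : f =ᵐ[μ] f' := hf.aestronglyMeasurable.ae_eq_mk
  have hGe : ∀ n, F n =ᵐ[μ] G n := fun n => (hF n).aestronglyMeasurable.ae_eq_mk
  have hf' : Integrable f' μ := hf.congr hfe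
  have hG : ∀ n, Integrable (G n) μ := fun n => (hF n).congr (hGe n)
  have e1 : ∀ n, (⨅ (A : Set S) (_ : MeasurableSet A),
      (∫ s in A, F n s ∂μ - ∫ s in A, f s ∂μ)) = ⨅ (A : Set S) (_ : MeasurableSet A),
      (∫ s in A, G n s ∂μ - ∫ s in A, f' s ∂μ) := by
    intro n
    refine iInf_congr fun A => iInf_congr fun _ => ?_
    rw [integral_congr_ae (ae_restrict_of_ae (hGe n)),
      integral_congr_ae (ae_restrict_of_ae hfe)]
  have e2 : ∀ n (ε : ℝ), μ {s | F n s ≤ f s - ε} = μ {s | G n s ≤ f' s - ε} := by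
    intro n ε
    refine measure_congr ?_
    filter_upwards [hGe n, hfe] with x h1 h2
    change (F n x ≤ f x - ε) = (G n x ≤ f' x - ε)
    rw [h1, h2]
  have e3 : ∀ n (K : ℝ), (∫ s in {x | F n x ≤ -K}, F n s ∂μ)
      = ∫ s in {x | G n x ≤ -K}, G n s ∂μ := by
    intro n K
    have hset : {x | F n x ≤ -K} =ᵐ[μ] ({x | G n x ≤ -K} : Set S) := by
      filter_upwards [hGe n] with x h1
      change (F n x ≤ -K) = (G n x ≤ -K)
      rw [h1]
    rw [Measure.restrict_congr_set hset, integral_congr_ae (ae_restrict_of_ae (hGe n))]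
  have key := uniform_fatou_aux μ f' G hf'm hGm hf' hG
  constructor
  · intro h
    have h' : ∀ ε : ℝ, 0 < ε → ∀ᶠ n in atTop,
        -ε ≤ ⨅ (A : Set S) (_ : MeasurableSet A),
          (∫ s in A, G n s ∂μ - ∫ s in A, f' s ∂μ) := by
      intro ε hε
      filter_upwards [h ε hε] with n hn
      rwa [← e1 n]
    obtain ⟨hi, hii⟩ := key.mp h'
    constructor
    · intro ε hε
      have := hi ε hε
      simpa only [← e2] using this
    · intro ε hε
      obtain ⟨K₀, hK₀⟩ := hii ε hε
      exact ⟨K₀, fun K hK n => (e3 n K) ▸ hK₀ K hK n⟩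
  · rintro ⟨hi, hii⟩
    have hi' : ∀ ε : ℝ, 0 < ε →
        Tendsto (fun n => μ {s | G n s ≤ f' s - ε}) atTop (𝓝 0) := by
      intro ε hε
      have := hi ε hε
      simpa only [e2] using this
    have hii' : ∀ ε : ℝ, 0 < ε → ∃ K₀ : ℝ, ∀ K ≥ K₀, ∀ n,
        -ε ≤ ∫ s in {x | G n x ≤ -K}, G n s ∂μ := by
      intro ε hε
      obtain ⟨K₀, hK₀⟩ := hii ε hε
      exact ⟨K₀, fun K hK n => (e3 n K).symm ▸ hK₀ K hK n⟩
    have h' := key.mpr ⟨hi', hii'⟩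
    intro ε hε
    filter_upwards [h' ε hε] with n hn
    rwa [e1 n]
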